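/- Let ℛ : Λ²ℝⁿ → Λ²ℝⁿ be a symmetric linear operator (abstracting the Riemann curvature operator at a point), let w ∈ SO(n), and define R_w : Λ²ℝⁿ → Λ²ℝⁿ by ⟨R_w ξ, ξ'⟩ = ⟨ξ, w⁻¹ℛ(w(ξ'e₁) ∧ w(e₁))⟩, where w acts on Λ²ℝⁿ by w(u∧v) = wu ∧ wv. Then for every a ∈ SO(n-1) ⊂ SO(n) (stabilizer of e₁ under the diagonal embedding), R_{wa} = a⁻¹ ∘ R_w ∘ a, where a acts on Λ²ℝⁿ by the induced (adjoint) action. -/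
import Mathlib


open scoped RealInnerProductSpace
noncomputable section

abbrev Euc (n : ℕ) := EuclideanSpace ℝ (Fin n)

def e (n : ℕ) (i : Fin n) : Euc n := EuclideanSpace.single i 1

/-- The skew-symmetric endomorphism associated to the 2-form `u ∧ v`,
namely `θ ↦ ⟪u,θ⟫ • v - ⟪v,θ⟫ • u`. -/
def wedge {n : ℕ} (u v : Euc n) : Euc n →ₗ[ℝ] Euc n where
  toFun θ := ⟪u, θ⟫ • v - ⟪v, θ⟫ • u
  map_add' x y := by simp [inner_add_right, add_smul]; abel
  map_smul' c x := by simp [inner_smul_right, mul_smul, smul_sub]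

/-- The inner product on `Λ²ℝⁿ ≅ 𝔰𝔬(n)` making `(e_i ∧ e_j)_{i<j}` orthonormal:
`⟨A,B⟩ = ½ tr(Aᵀ B)`. -/
def ip {n : ℕ} (A B : Euc n →ₗ[ℝ] Euc n) : ℝ :=
  (1 / 2) * ∑ i : Fin n, ⟪A (e n i), B (e n i)⟫

def IsSkew {n : ℕ} (A : Euc n →ₗ[ℝ] Euc n) : Prop :=
  ∀ x y : Euc n, ⟪A x, y⟫ = -⟪x, A y⟫

/-- The induced (adjoint / functorial) action of an isometry `a` on `Λ²ℝⁿ ≅ 𝔰𝔬(n)`: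
`ξ ↦ a ∘ ξ ∘ a⁻¹`. -/
def conj {n : ℕ} (a : Euc n ≃ₗᵢ[ℝ] Euc n) (ξ : Euc n →ₗ[ℝ] Euc n) : Euc n →ₗ[ℝ] Euc n :=
  (a.toLinearEquiv : Euc n →ₗ[ℝ] Euc n) ∘ₗ ξ ∘ₗ (a.symm.toLinearEquiv : Euc n →ₗ[ℝ] Euc n)

section Aux

variable {n : ℕ}

lemma conj_apply (a : Euc n ≃ₗᵢ[ℝ] Euc n) (ξ : Euc n →ₗ[ℝ] Euc n) (x : Euc n) :
    conj a ξ x = a (ξ (a.symm x)) := rfl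

lemma conj_conj_symm (a : Euc n ≃ₗᵢ[ℝ] Euc n) (ξ : Euc n →ₗ[ℝ] Euc n) :
    conj a (conj a.symm ξ) = ξ := by
  ext x
  simp [conj_apply]

lemma conj_symm_conj (a : Euc n ≃ₗᵢ[ℝ] Euc n) (ξ : Euc n →ₗ[ℝ] Euc n) :
    conj a.symm (conj a ξ) = ξ := by
  ext x
  simp [conj_apply]

lemma conj_isSkew (a : Euc n ≃ₗᵢ[ℝ] Euc n) {ξ : Euc n →ₗ[ℝ] Euc n} (hξ : IsSkew ξ) :
    IsSkew (conj a ξ) := by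
  intro x y
  calc ⟪a (ξ (a.symm x)), y⟫
      = ⟪a (ξ (a.symm x)), a (a.symm y)⟫ := by rw [a.apply_symm_apply]
    _ = ⟪ξ (a.symm x), a.symm y⟫ := a.inner_map_map _ _
    _ = -⟪a.symm x, ξ (a.symm y)⟫ := hξ _ _
    _ = -⟪a (a.symm x), a (ξ (a.symm y))⟫ := by rw [a.inner_map_map]
    _ = -⟪x, a (ξ (a.symm y))⟫ := by rw [a.apply_symm_apply]

lemma sum_inner_eq_trace (T : Euc n →ₗ[ℝ] Euc n) :
    ∑ i : Fin n, ⟪e n i, T (e n i)⟫ = LinearMap.trace ℝ (Euc n) T := by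
  rw [LinearMap.trace_eq_matrix_trace ℝ (EuclideanSpace.basisFun (Fin n) ℝ).toBasis,
    Matrix.trace]
  refine Finset.sum_congr rfl fun i _ => ?_
  rw [Matrix.diag_apply, LinearMap.toMatrix_apply]
  simp only [OrthonormalBasis.coe_toBasis, OrthonormalBasis.coe_toBasis_repr_apply,
    EuclideanSpace.basisFun_repr, EuclideanSpace.basisFun_apply]
  rw [e, show (EuclideanSpace.single i (1:ℝ) : Euc n) = e n i from rfl]
  simp [e, EuclideanSpace.inner_single_left]

lemma adjoint_isometry (a : Euc n ≃ₗᵢ[ℝ] Euc n) :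
    LinearMap.adjoint (a.toLinearEquiv : Euc n →ₗ[ℝ] Euc n)
      = (a.symm.toLinearEquiv : Euc n →ₗ[ℝ] Euc n) := by
  symm
  rw [LinearMap.eq_adjoint_iff]
  intro x y
  calc ⟪a.symm x, y⟫ = ⟪a (a.symm x), a y⟫ := (a.inner_map_map _ _).symm
    _ = ⟪x, a y⟫ := by rw [a.apply_symm_apply]
  -- done

lemma ip_eq_trace (A B : Euc n →ₗ[ℝ] Euc n) :
    ip A B = (1 / 2) * LinearMap.trace ℝ (Euc n) (LinearMap.adjoint A ∘ₗ B) := by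
  rw [ip, ← sum_inner_eq_trace]
  congr 1
  refine Finset.sum_congr rfl fun i _ => ?_
  rw [LinearMap.comp_apply, LinearMap.adjoint_inner_right]

lemma adjoint_conj (a : Euc n ≃ₗᵢ[ℝ] Euc n) (A : Euc n →ₗ[ℝ] Euc n) :
    LinearMap.adjoint (conj a A) = conj a (LinearMap.adjoint A) := by
  rw [conj, conj, LinearMap.adjoint_comp, LinearMap.adjoint_comp,
    adjoint_isometry, adjoint_isometry]
  simp only [LinearIsometryEquiv.symm_symm, LinearMap.comp_assoc]

lemma conj_comp (a : Euc n ≃ₗᵢ[ℝ] Euc n) (A B : Euc n →ₗ[ℝ] Euc n) :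
    conj a A ∘ₗ conj a B = conj a (A ∘ₗ B) := by
  ext x
  simp [conj_apply]

lemma trace_conj_eq (a : Euc n ≃ₗᵢ[ℝ] Euc n) (T : Euc n →ₗ[ℝ] Euc n) :
    LinearMap.trace ℝ (Euc n) (conj a T) = LinearMap.trace ℝ (Euc n) T := by
  have : conj a T = a.toLinearEquiv.conj T := by
    ext x
    simp [conj_apply, LinearEquiv.conj_apply]
  rw [this, LinearMap.trace_conj']

lemma ip_conj (a : Euc n ≃ₗᵢ[ℝ] Euc n) (A B : Euc n →ₗ[ℝ] Euc n) :
    ip (conj a A) (conj a B) = ip A B := by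
  rw [ip_eq_trace, ip_eq_trace, adjoint_conj, conj_comp, trace_conj_eq]

lemma ip_conj_symm_left (a : Euc n ≃ₗᵢ[ℝ] Euc n) (A B : Euc n →ₗ[ℝ] Euc n) :
    ip (conj a.symm A) B = ip A (conj a B) := by
  conv_lhs => rw [← conj_conj_symm a.symm B]
  rw [ip_conj]
  simp [LinearIsometryEquiv.symm_symm]

lemma ip_conj_symm_right (a : Euc n ≃ₗᵢ[ℝ] Euc n) (A B : Euc n →ₗ[ℝ] Euc n) :
    ip A (conj a.symm B) = ip (conj a A) B := by
  conv_lhs => rw [← conj_symm_conj a A]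
  rw [ip_conj]

lemma ip_self_nonneg_eq_zero {A : Euc n →ₗ[ℝ] Euc n} (h : ip A A = 0) : A = 0 := by
  have h2 : ∑ i : Fin n, ⟪A (e n i), A (e n i)⟫ = 0 := by
    have := h
    rw [ip] at this
    linarith
  have hz : ∀ i : Fin n, A (e n i) = 0 := by
    intro i
    have hnn : ∀ j ∈ Finset.univ, (0:ℝ) ≤ ⟪A (e n j), A (e n j)⟫ :=
      fun j _ => real_inner_self_nonneg
    have := (Finset.sum_eq_zero_iff_of_nonneg hnn).mp h2 i (Finset.mem_univ i)
    exact inner_self_eq_zero.mp this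
  apply (EuclideanSpace.basisFun (Fin n) ℝ).toBasis.ext
  intro i
  simpa [OrthonormalBasis.coe_toBasis, EuclideanSpace.basisFun_apply, e] using hz i

lemma ip_sub_left (A B C : Euc n →ₗ[ℝ] Euc n) : ip (A - B) C = ip A C - ip B C := by
  simp only [ip, LinearMap.sub_apply, inner_sub_left, Finset.sum_sub_distrib]
  ring

lemma skew_ext {A B : Euc n →ₗ[ℝ] Euc n} (hA : IsSkew A) (hB : IsSkew B)
    (h : ∀ ξ' : Euc n →ₗ[ℝ] Euc n, IsSkew ξ' → ip A ξ' = ip B ξ') : A = B := by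
  have hAB : IsSkew (A - B) := by
    intro x y
    simp only [LinearMap.sub_apply, inner_sub_left, inner_sub_right, hA x y, hB x y]
    ring
  have : ip (A - B) (A - B) = 0 := by
    rw [ip_sub_left, h _ hAB]
    ring
  exact sub_eq_zero.mp (ip_self_nonneg_eq_zero this)

end Aux

/-- Equivariance of the frame-bundle curvature operator: `R_{wa} = a⁻¹ ∘ R_w ∘ a`
for `a ∈ SO(n-1)` (the stabilizer of `e₁`). -/
theorem stmt7 (n : ℕ) (hn : 2 ≤ n) [NeZero n]
    (ℛ : (Euc n →ₗ[ℝ] Euc n) →ₗ[ℝ] (Euc n →ₗ[ℝ] Euc n))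
    (hsymm : ∀ A B : Euc n →ₗ[ℝ] Euc n, IsSkew A → IsSkew B → ip (ℛ A) B = ip A (ℛ B))
    (Rw : (Euc n ≃ₗᵢ[ℝ] Euc n) → (Euc n →ₗ[ℝ] Euc n) → (Euc n →ₗ[ℝ] Euc n))
    (hRwSkew : ∀ w ξ, IsSkew ξ → IsSkew (Rw w ξ))
    (hRw : ∀ (w : Euc n ≃ₗᵢ[ℝ] Euc n) (ξ ξ' : Euc n →ₗ[ℝ] Euc n), IsSkew ξ → IsSkew ξ' →
      ip (Rw w ξ) ξ' = ip ξ (conj w.symm (ℛ (wedge (w (ξ' (e n 0))) (w (e n 0)))))) :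
    ∀ (w a : Euc n ≃ₗᵢ[ℝ] Euc n),
      LinearMap.det ((w.toLinearEquiv : Euc n →ₗ[ℝ] Euc n)) = 1 →
      LinearMap.det ((a.toLinearEquiv : Euc n →ₗ[ℝ] Euc n)) = 1 →
      a (e n 0) = e n 0 →
      ∀ ξ : Euc n →ₗ[ℝ] Euc n, IsSkew ξ →
        Rw (a.trans w) ξ = conj a.symm (Rw w (conj a ξ)) := by
  intro w a hw ha hae ξ hξ
  have ha' : a.symm (e n 0) = e n 0 := by
    have := congrArg a.symm hae
    rw [a.symm_apply_apply] at this
    exact this.symm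
  apply skew_ext (hRwSkew _ _ hξ)
    (conj_isSkew a.symm (hRwSkew w _ (conj_isSkew a hξ)))
  intro ξ' hξ'
  rw [hRw _ _ _ hξ hξ', ip_conj_symm_left,
    hRw w (conj a ξ) (conj a ξ') (conj_isSkew a hξ) (conj_isSkew a hξ')]
  -- identify the wedge arguments
  have harg1 : w ((conj a ξ') (e n 0)) = (a.trans w) (ξ' (e n 0)) := by
    rw [conj_apply, ha', LinearIsometryEquiv.trans_apply]
  have harg2 : w (e n 0) = (a.trans w) (e n 0) := by
    rw [LinearIsometryEquiv.trans_apply, hae]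
  rw [harg1, harg2]
  -- now reduce conj (a.trans w).symm to conj a.symm ∘ conj w.symm
  set Z := ℛ (wedge ((a.trans w) (ξ' (e n 0))) ((a.trans w) (e n 0))) with hZ
  have hsplit : conj (a.trans w).symm Z = conj a.symm (conj w.symm Z) := by
    ext x
    simp [conj_apply]
  rw [hsplit]
  exact ip_conj_symm_right a ξ (conj w.symm Z)
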